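/- Let σ > 0, let n be a nonzero integer, and let λ ∈ ℝ with λ ≥ 0. Suppose (y, h) is a solution of the projected eigensystem with parameters (σ, n, λ). Then y(x) = 0 for every x ∈ [−1, 1] and h = 0. (This expresses that the operator A_n has no nonnegative eigenvalues.) -/

import Mathlib

open Set

/-- The projected eigensystem (Fourier mode `n` of the linearized Stefan problem)
has no nonnegative eigenvalues: if `σ > 0`, `n ≠ 0`, `λ ≥ 0` and `(y, h)` solves
`λ·y - y'' + n²·y = 0` on `[-1,1]`, `λ·h = y'(1)`, `y(-1) = 0`, `y(1) = -σ·n²·h`,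
with `y` twice continuously differentiable on `[-1,1]`, then `y ≡ 0` on `[-1,1]` and `h = 0`. -/
theorem stmt0 (σ : ℝ) (hσ : 0 < σ) (n : ℤ) (hn : n ≠ 0) (lam : ℝ) (hlam : 0 ≤ lam)
    (y y' y'' : ℝ → ℝ) (h : ℝ)
    (hy' : ∀ x ∈ Icc (-1:ℝ) 1, HasDerivWithinAt y (y' x) (Icc (-1:ℝ) 1) x)
    (hy'' : ∀ x ∈ Icc (-1:ℝ) 1, HasDerivWithinAt y' (y'' x) (Icc (-1:ℝ) 1) x)
    (hcont : ContinuousOn y'' (Icc (-1:ℝ) 1))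
    (heq : ∀ x ∈ Icc (-1:ℝ) 1, lam * y x - y'' x + (n:ℝ)^2 * y x = 0)
    (hbc : lam * h = y' 1)
    (hbot : y (-1) = 0)
    (htop : y 1 = -σ * (n:ℝ)^2 * h) :
    (∀ x ∈ Icc (-1:ℝ) 1, y x = 0) ∧ h = 0 := by
  have hmem1 : (1:ℝ) ∈ Icc (-1:ℝ) 1 := by norm_num
  have hmemm1 : (-1:ℝ) ∈ Icc (-1:ℝ) 1 := by norm_num
  have hint : interior (Icc (-1:ℝ) 1) = Ioo (-1:ℝ) 1 := interior_Icc
  have hsub : Ioo (-1:ℝ) 1 ⊆ Icc (-1:ℝ) 1 := Ioo_subset_Icc_self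
  have hn2 : (0:ℝ) < (n:ℝ)^2 := by positivity
  -- energy function E = y * y'
  set E : ℝ → ℝ := fun x => y x * y' x with hE
  have hEcont : ContinuousOn E (Icc (-1:ℝ) 1) := by
    apply ContinuousOn.mul
    · exact fun x hx => (hy' x hx).continuousWithinAt
    · exact fun x hx => (hy'' x hx).continuousWithinAt
  have hEderiv : ∀ x ∈ Icc (-1:ℝ) 1,
      HasDerivWithinAt E (y' x * y' x + y x * y'' x) (Icc (-1:ℝ) 1) x :=
    fun x hx => (hy' x hx).mul (hy'' x hx)
  have hy''eq : ∀ x ∈ Icc (-1:ℝ) 1, y'' x = (lam + (n:ℝ)^2) * y x := by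
    intro x hx; have := heq x hx; ring_nf; ring_nf at this; linarith
  have hEnonneg : ∀ x ∈ Icc (-1:ℝ) 1, 0 ≤ y' x * y' x + y x * y'' x := by
    intro x hx
    rw [hy''eq x hx]
    have : y x * ((lam + (n:ℝ)^2) * y x) = (lam + (n:ℝ)^2) * (y x * y x) := by ring
    rw [this]
    have h1 : 0 ≤ y' x * y' x := mul_self_nonneg _
    have h2 : 0 ≤ (lam + (n:ℝ)^2) * (y x * y x) :=
      mul_nonneg (by positivity) (mul_self_nonneg _)
    linarith
  have hEmono : MonotoneOn E (Icc (-1:ℝ) 1) := by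
    apply monotoneOn_of_hasDerivWithinAt_nonneg (convex_Icc _ _) hEcont
      (f' := fun x => y' x * y' x + y x * y'' x)
    · intro x hx
      rw [hint] at hx ⊢
      exact (hEderiv x (hsub hx)).mono hsub
    · intro x hx; rw [hint] at hx; exact hEnonneg x (hsub hx)
  have hEm1 : E (-1) = 0 := by simp [hE, hbot]
  have hE1le : E 1 ≤ 0 := by
    have : E 1 = -(σ * (n:ℝ)^2 * lam * (h * h)) := by
      simp only [hE]; rw [htop, ← hbc]; ring
    rw [this]
    have : 0 ≤ σ * (n:ℝ)^2 * lam * (h * h) :=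
      mul_nonneg (mul_nonneg (mul_nonneg hσ.le hn2.le) hlam) (mul_self_nonneg _)
    linarith
  have hE1 : E 1 = 0 := le_antisymm hE1le (hEm1 ▸ hEmono hmemm1 hmem1 (by norm_num))
  have hEzero : ∀ x ∈ Icc (-1:ℝ) 1, E x = 0 := by
    intro x hx
    have h1 : E (-1) ≤ E x := hEmono hmemm1 hx hx.1
    have h2 : E x ≤ E 1 := hEmono hx hmem1 hx.2
    rw [hEm1] at h1; rw [hE1] at h2; linarith
  -- F = y^2 has derivative 2*E = 0, so it is constant
  set F : ℝ → ℝ := fun x => y x * y x with hF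
  have hFcont : ContinuousOn F (Icc (-1:ℝ) 1) :=
    ContinuousOn.mul (fun x hx => (hy' x hx).continuousWithinAt)
      (fun x hx => (hy' x hx).continuousWithinAt)
  have hFderiv : ∀ x ∈ Ioo (-1:ℝ) 1, HasDerivWithinAt F 0 (Ioo (-1:ℝ) 1) x := by
    intro x hx
    have := ((hy' x (hsub hx)).mul (hy' x (hsub hx))).mono hsub
    have hEx : y' x * y x + y x * y' x = 2 * E x := by simp [hE]; ring
    rw [hEx, hEzero x (hsub hx)] at this
    simp at this; exact this
  have hFmono : MonotoneOn F (Icc (-1:ℝ) 1) := by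
    apply monotoneOn_of_hasDerivWithinAt_nonneg (convex_Icc _ _) hFcont (f' := fun _ => (0:ℝ))
    · intro x hx; rw [hint] at hx ⊢; exact hFderiv x hx
    · intro x _; exact le_refl 0
  have hFanti : AntitoneOn F (Icc (-1:ℝ) 1) := by
    apply antitoneOn_of_hasDerivWithinAt_nonpos (convex_Icc _ _) hFcont (f' := fun _ => (0:ℝ))
    · intro x hx; rw [hint] at hx ⊢; exact hFderiv x hx
    · intro x _; exact le_refl 0
  have hyzero : ∀ x ∈ Icc (-1:ℝ) 1, y x = 0 := by
    intro x hx
    have h1 : F (-1) ≤ F x := hFmono hmemm1 hx hx.1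
    have h2 : F x ≤ F (-1) := hFanti hmemm1 hx hx.1
    have hFm1 : F (-1) = 0 := by simp [hF, hbot]
    have : F x = 0 := by linarith
    have := (mul_self_eq_zero).1 this
    exact this
  refine ⟨hyzero, ?_⟩
  have h1 : y 1 = 0 := hyzero 1 hmem1
  rw [htop] at h1
  have : σ * (n:ℝ)^2 ≠ 0 := by positivity
  have := mul_eq_zero.1 (by linarith : -σ * (n:ℝ)^2 * h = 0)
  rcases this with hc | hc
  · exfalso; apply this; nlinarith [hc]
  · exact hc
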